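/- If (a,b,c) is a solution of the *-Markov equation a·a* + b·b* + c·c* - abc = (3s₁s₂ - s₁³)/s₃ in ℤ[s₁,s₂,s₃^{±1}], then (-a*, c*, b* - ac) is also a solution of the same equation. -/

import Mathlib

open MvPolynomial

noncomputable section

/-- The polynomial ring `ℤ[s₁,s₂,s₃]`. -/
abbrev A3 := MvPolynomial (Fin 3) ℤ

def S1 : A3 := X 0
def S2 : A3 := X 1
def S3 : A3 := X 2

/-- The Laurent ring `ℤ[s₁,s₂,s₃^{±1}]`, polynomial in `s₁,s₂`, Laurent in `s₃`. -/
abbrev LP := Localization.Away S3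

def ι : A3 →+* LP := algebraMap A3 LP

def s₁ : LP := ι S1
def s₂ : LP := ι S2
def s₃ : LP := ι S3
/-- `s₃⁻¹`. -/
def s₃' : LP := IsLocalization.Away.invSelf S3

lemma s₃_mul_s₃' : s₃ * s₃' = 1 := IsLocalization.Away.mul_invSelf S3

/-- The `*`-involution `f ↦ f*`, determined by `s₁ ↦ s₂/s₃`, `s₂ ↦ s₁/s₃`, `s₃ ↦ 1/s₃`. -/
def starMap : LP →+* LP :=
  IsLocalization.Away.lift
    (g := eval₂Hom (Int.castRingHom LP) ![s₂ * s₃', s₁ * s₃', s₃']) S3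
    (by
      have h : (eval₂Hom (Int.castRingHom LP) ![s₂ * s₃', s₁ * s₃', s₃']) S3 = s₃' := by
        simp [S3]
      rw [h]
      exact ⟨⟨_, s₃, (by rw [mul_comm]; exact s₃_mul_s₃'), s₃_mul_s₃'⟩, rfl⟩)

lemma starMap_ι (p : A3) :
    starMap (ι p) = eval₂Hom (Int.castRingHom LP) ![s₂ * s₃', s₁ * s₃', s₃'] p :=
  IsLocalization.Away.lift_eq _ _ p

lemma starMap_s₁ : starMap s₁ = s₂ * s₃' := by
  rw [s₁, starMap_ι]; simp [S1]

lemma starMap_s₂ : starMap s₂ = s₁ * s₃' := by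
  rw [s₂, starMap_ι]; simp [S2]

lemma starMap_s₃ : starMap s₃ = s₃' := by
  rw [s₃, starMap_ι]; simp [S3]

lemma starMap_s₃' : starMap s₃' = s₃ := by
  have h1 : (1 : LP) = s₃' * starMap s₃' := by
    have t := map_mul starMap s₃ s₃'
    rw [s₃_mul_s₃', map_one, starMap_s₃] at t
    exact t
  calc starMap s₃' = (s₃ * s₃') * starMap s₃' := by rw [s₃_mul_s₃', one_mul]
    _ = s₃ * (s₃' * starMap s₃') := by ring
    _ = s₃ := by rw [← h1, mul_one]

lemma ss₁ : starMap (starMap s₁) = s₁ := by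
  rw [starMap_s₁, map_mul, starMap_s₂, starMap_s₃', mul_assoc, mul_comm s₃' s₃, s₃_mul_s₃',
    mul_one]

lemma ss₂ : starMap (starMap s₂) = s₂ := by
  rw [starMap_s₂, map_mul, starMap_s₁, starMap_s₃', mul_assoc, mul_comm s₃' s₃, s₃_mul_s₃',
    mul_one]

lemma ss₃ : starMap (starMap s₃) = s₃ := by rw [starMap_s₃, starMap_s₃']

lemma starMap_starMap (x : LP) : starMap (starMap x) = x := by
  have key : (starMap.comp starMap).comp ι = ι := by
    apply MvPolynomial.ringHom_ext
    · intro n; simp [ι]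
    · intro i
      fin_cases i
      · exact ss₁
      · exact ss₂
      · exact ss₃
  have : starMap.comp starMap = RingHom.id LP := by
    apply IsLocalization.ringHom_ext (Submonoid.powers S3)
    exact key.trans (RingHom.id_comp ι).symm
  exact DFunLike.congr_fun this x

/-- If `(a,b,c)` solves the `*`-Markov equation, then so does `(-a*, c*, b* - ac)`. -/
theorem starMarkov_tau1 (a b c : LP)
    (h : a * starMap a + b * starMap b + c * starMap c - a * b * c
        = (3 * s₁ * s₂ - s₁ ^ 3) * s₃') :
    (-(starMap a)) * starMap (-(starMap a)) + (starMap c) * starMap (starMap c)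
        + (starMap b - a * c) * starMap (starMap b - a * c)
        - (-(starMap a)) * (starMap c) * (starMap b - a * c)
      = (3 * s₁ * s₂ - s₁ ^ 3) * s₃' := by
  simp only [map_neg, map_sub, map_mul, starMap_starMap]
  linear_combination h
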